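/- Let ε₁ and ε₂ be independent real-valued random variables with variances v₁ = Var(ε₁) and v₂ = Var(ε₂), and let h, ĥ > 0. Define Var_p1 = h²·v₁ and Var_p2 = h²·(1 - h/(2ĥ))²·v₁ + (h⁴/(4ĥ²))·v₂. If the ratio r = h/ĥ satisfies 1 ≤ r ≤ 4v₁/(v₁ + v₂), then Var_p2 ≤ Var_p1. -/
import Mathlib


open MeasureTheory ProbabilityTheory

/-- If the step-size ratio `r = h/hhat` lies in `[1, 4v₁/(v₁+v₂)]`, the variance of the
gradient-based (second-order) perturbation does not exceed that of the first-order one. -/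
theorem stmt2 {Ω : Type*} {mΩ : MeasurableSpace Ω} (μ : Measure Ω)
    [IsProbabilityMeasure μ] (ε₁ ε₂ : Ω → ℝ)
    (hindep : IndepFun ε₁ ε₂ μ)
    (v₁ v₂ : ℝ) (hv₁ : v₁ = variance ε₁ μ) (hv₂ : v₂ = variance ε₂ μ)
    (hv₁pos : 0 < v₁) (hv₂pos : 0 < v₂)
    (h hhat : ℝ) (hh : 0 < h) (hhhat : 0 < hhat)
    (hr₁ : 1 ≤ h / hhat) (hr₂ : h / hhat ≤ 4 * v₁ / (v₁ + v₂)) :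
    h ^ 2 * (1 - h / (2 * hhat)) ^ 2 * v₁ + h ^ 4 / (4 * hhat ^ 2) * v₂
      ≤ h ^ 2 * v₁ := by
  have hsum : 0 < v₁ + v₂ := by linarith
  have key : h * (v₁ + v₂) ≤ 4 * v₁ * hhat := by
    rw [div_le_div_iff₀ hhhat hsum] at hr₂
    linarith
  have hhle : hhat ≤ h := by
    rw [le_div_iff₀ hhhat] at hr₁; linarith
  have e1 : h ^ 2 * (1 - h / (2 * hhat)) ^ 2 * v₁ + h ^ 4 / (4 * hhat ^ 2) * v₂
      = h ^ 2 * v₁ + (h ^ 3 / (4 * hhat ^ 2)) * (h * (v₁ + v₂) - 4 * v₁ * hhat) := by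
    field_simp
    ring
  rw [e1]
  have hterm : (h ^ 3 / (4 * hhat ^ 2)) * (h * (v₁ + v₂) - 4 * v₁ * hhat) ≤ 0 :=
    mul_nonpos_of_nonneg_of_nonpos (by positivity) (by linarith)
  linarith
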